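/- Let G act line-transitively on a non-trivial finite regular linear space S which is not a projective plane, and let α be a point. Then the stabilizer G_α is self-normalizing in G: N_G(G_α) = G_α. -/

import Mathlib

open Pointwise

structure LinearSpace (P : Type*) [DecidableEq P] where
  lines : Finset (Finset P)
  exists_unique_line : ∀ a b : P, a ≠ b → ∃! L, L ∈ lines ∧ a ∈ L ∧ b ∈ L

namespace LinearSpace

variable {P : Type*} [DecidableEq P]

/-- Non-trivial: every line has at least 3 points and there are at least two lines. -/
def Nontrivial (S : LinearSpace P) : Prop :=
  (∀ L ∈ S.lines, 3 ≤ L.card) ∧ 2 ≤ S.lines.card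

/-- Regular with line size `k` and `r` lines per point. -/
def Regular [Fintype P] (S : LinearSpace P) (k r : ℕ) : Prop :=
  (∀ L ∈ S.lines, L.card = k) ∧ ∀ a : P, (S.lines.filter fun L => a ∈ L).card = r

/-- `G` acts as automorphisms of `S`, transitively on the set of lines. -/
def LineTrans (G : Type*) [Group G] [MulAction G P] (S : LinearSpace P) : Prop :=
  (∀ (g : G), ∀ L ∈ S.lines, g • L ∈ S.lines) ∧
    ∀ L₁ ∈ S.lines, ∀ L₂ ∈ S.lines, ∃ g : G, g • L₁ = L₂

end LinearSpace

section Aux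

namespace LinearSpace

variable {P : Type*} [DecidableEq P]

noncomputable def theLine (S : LinearSpace P) (a b : P) (h : a ≠ b) : Finset P :=
  (S.exists_unique_line a b h).choose

lemma theLine_mem (S : LinearSpace P) (a b : P) (h : a ≠ b) :
    S.theLine a b h ∈ S.lines := (S.exists_unique_line a b h).choose_spec.1.1

lemma left_mem_theLine (S : LinearSpace P) (a b : P) (h : a ≠ b) :
    a ∈ S.theLine a b h := (S.exists_unique_line a b h).choose_spec.1.2.1

lemma right_mem_theLine (S : LinearSpace P) (a b : P) (h : a ≠ b) :
    b ∈ S.theLine a b h := (S.exists_unique_line a b h).choose_spec.1.2.2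

lemma eq_theLine (S : LinearSpace P) {a b : P} (h : a ≠ b) {L : Finset P}
    (hL : L ∈ S.lines) (ha : a ∈ L) (hb : b ∈ L) : L = S.theLine a b h :=
  (S.exists_unique_line a b h).choose_spec.2 L ⟨hL, ha, hb⟩

lemma line_eq_line (S : LinearSpace P) {a b : P} (h : a ≠ b) {L₁ L₂ : Finset P}
    (h₁ : L₁ ∈ S.lines) (h₂ : L₂ ∈ S.lines) (ha₁ : a ∈ L₁) (hb₁ : b ∈ L₁)
    (ha₂ : a ∈ L₂) (hb₂ : b ∈ L₂) : L₁ = L₂ := by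
  rw [S.eq_theLine h h₁ ha₁ hb₁, S.eq_theLine h h₂ ha₂ hb₂]

/-- The lines through `x` partition any set avoiding `x`. -/
lemma sum_inter_lines [Fintype P] (S : LinearSpace P) (x : P) (A : Finset P) (hxA : x ∉ A) :
    ∑ L ∈ S.lines.filter (fun L => x ∈ L), (L ∩ A).card = A.card := by
  rw [← Finset.card_biUnion]
  · congr 1
    ext a
    simp only [Finset.mem_biUnion, Finset.mem_filter, Finset.mem_inter]
    constructor
    · rintro ⟨L, ⟨-, -⟩, -, ha⟩; exact ha
    · intro ha
      have hax : x ≠ a := fun h => hxA (h ▸ ha)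
      exact ⟨S.theLine x a hax, ⟨S.theLine_mem x a hax, S.left_mem_theLine x a hax⟩,
        S.right_mem_theLine x a hax, ha⟩
  · intro L₁ h₁ L₂ h₂ hne
    simp only [Finset.mem_coe, Finset.mem_filter] at h₁ h₂
    rw [Function.onFun, Finset.disjoint_left]
    rintro a ha₁ ha₂
    simp only [Finset.mem_inter] at ha₁ ha₂
    have hax : x ≠ a := fun h => hxA (h ▸ ha₁.2)
    exact hne (S.line_eq_line hax h₁.1 h₂.1 h₁.2 ha₁.1 h₂.2 ha₂.1)

/-- Flag double counting. -/
lemma flag_count [Fintype P] (S : LinearSpace P) :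
    ∑ L ∈ S.lines, L.card = ∑ x : P, (S.lines.filter (fun L => x ∈ L)).card := by
  have h1 : ∀ L : Finset P, L.card = ∑ x : P, if x ∈ L then 1 else 0 := by
    intro L; rw [← Finset.card_filter]; congr 1; ext a; simp
  have h2 : ∀ x : P, (S.lines.filter (fun L => x ∈ L)).card
      = ∑ L ∈ S.lines, if x ∈ L then 1 else 0 := fun x => Finset.card_filter _ _
  simp_rw [h1, h2]
  exact Finset.sum_comm

/-- Numerical facts about a nontrivial regular linear space. -/
theorem numeric_facts [Fintype P] (S : LinearSpace P) (v b k r : ℕ) (hv : v = Fintype.card P)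
    (hb : b = S.lines.card) (hnt : S.Nontrivial) (hreg : S.Regular k r) :
    3 ≤ k ∧ k ≤ v ∧ r * (k - 1) = v - 1 ∧ b * k = v * r ∧ k ≤ r := by
  classical
  obtain ⟨hnt3, hnt2⟩ := hnt
  obtain ⟨hk, hr⟩ := hreg
  obtain ⟨L₀, hL₀⟩ := Finset.card_pos.mp (by omega : 0 < S.lines.card)
  have hk3 : 3 ≤ k := (hk L₀ hL₀) ▸ hnt3 L₀ hL₀
  have hkv : k ≤ v := by
    rw [hv, ← hk L₀ hL₀, ← Finset.card_univ]
    exact Finset.card_le_card (Finset.subset_univ L₀)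
  have hrk : ∀ x : P, r * (k - 1) = v - 1 := by
    intro x
    have := S.sum_inter_lines x (Finset.univ.erase x) (Finset.notMem_erase x _)
    rw [Finset.card_erase_of_mem (Finset.mem_univ x), Finset.card_univ, ← hv] at this
    rw [← this, Finset.sum_congr rfl fun L hL => ?_, Finset.sum_const, hr x, smul_eq_mul]
    simp only [Finset.mem_filter] at hL
    have : L ∩ Finset.univ.erase x = L.erase x := by
      ext a; simp [Finset.mem_erase, and_comm]
    rw [this, Finset.card_erase_of_mem hL.2, hk L hL.1]
  have hbk : b * k = v * r := by
    have h1 : ∑ L ∈ S.lines, L.card = b * k := by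
      rw [Finset.sum_congr rfl fun L hL => hk L hL, Finset.sum_const, hb, smul_eq_mul]
    have h2 : ∑ x : P, (S.lines.filter (fun L => x ∈ L)).card = v * r := by
      rw [Finset.sum_congr rfl fun x _ => hr x, Finset.sum_const, Finset.card_univ, ← hv,
        smul_eq_mul]
    rw [← h1, ← h2]; exact S.flag_count
  have hkr : k ≤ r := by
    have hoff : ∃ x : P, x ∉ L₀ := by
      by_contra hall
      push_neg at hall
      have : ∀ L ∈ S.lines, L = L₀ := by
        intro L hL
        obtain ⟨a, ha, c, hc, hac⟩ := Finset.one_lt_card.mp (by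
          have := hnt3 L hL; omega : 1 < L.card)
        exact S.line_eq_line hac hL hL₀ ha hc (hall a) (hall c)
      have : S.lines.card ≤ 1 := Finset.card_le_one.mpr fun a ha b hb => by
        rw [this a ha, this b hb]
      omega
    obtain ⟨x, hx⟩ := hoff
    have hinj : ∀ a ∈ L₀, ∀ c ∈ L₀,
        ∀ (ha : x ≠ a) (hc : x ≠ c), S.theLine x a ha = S.theLine x c hc → a = c := by
      intro a ha c hc hxa hxc heq
      by_contra hac
      have h1 : S.theLine x a hxa = L₀ := S.line_eq_line hac (S.theLine_mem x a hxa) hL₀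
        (S.right_mem_theLine x a hxa) (heq ▸ S.right_mem_theLine x c hxc) ha hc
      exact hx (h1 ▸ S.left_mem_theLine x a hxa)
    have : L₀.card ≤ (S.lines.filter (fun L => x ∈ L)).card := by
      apply Finset.card_le_card_of_injOn
        (fun a => if h : x = a then L₀ else S.theLine x a h)
      · intro a ha
        have hxa : x ≠ a := fun h => hx (h ▸ ha)
        simp only [dif_neg hxa, Finset.mem_coe, Finset.mem_filter]
        exact ⟨S.theLine_mem x a hxa, S.left_mem_theLine x a hxa⟩
      · intro a ha c hc heq
        simp only [Finset.mem_coe] at ha hc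
        have hxa : x ≠ a := fun h => hx (h ▸ ha)
        have hxc : x ≠ c := fun h => hx (h ▸ hc)
        simp only [dif_neg hxa, dif_neg hxc] at heq
        exact hinj a ha c hc hxa hxc heq
    rwa [hk L₀ hL₀, hr x] at this
  have hP : Nonempty P := by
    obtain ⟨a, ha⟩ := Finset.card_pos.mp (by have := hnt3 L₀ hL₀; omega : 0 < L₀.card)
    exact ⟨a⟩
  exact ⟨hk3, hkv, hrk (Classical.arbitrary P), hbk, hkr⟩

/-- Line-transitivity implies point-transitivity. -/
theorem point_trans [Fintype P] {G : Type*} [Group G] [MulAction G P]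
    (S : LinearSpace P) (r : ℕ) (hr : ∀ a : P, (S.lines.filter fun L => a ∈ L).card = r)
    (hr2 : 2 ≤ r) (hlt : S.LineTrans G) : ∀ x y : P, x ∈ MulAction.orbit G y := by
  classical
  intro x y
  by_contra hx
  set A : Finset P := Finset.univ.filter (fun a => a ∈ MulAction.orbit G y) with hA
  have hmemA : ∀ a : P, a ∈ A ↔ a ∈ MulAction.orbit G y := by intro a; simp [hA]
  have hyA : y ∈ A := (hmemA y).mpr (MulAction.mem_orbit_self y)
  have hxA : x ∉ A := fun h => hx ((hmemA x).mp h)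
  have hAinv : ∀ g : G, g • A = A := by
    intro g; ext a
    constructor
    · intro ha
      obtain ⟨c, hc, rfl⟩ := Finset.mem_smul_finset.mp ha
      obtain ⟨h, rfl⟩ := MulAction.mem_orbit_iff.mp ((hmemA c).mp hc)
      exact (hmemA _).mpr (MulAction.mem_orbit_iff.mpr ⟨g * h, mul_smul g h y⟩)
    · intro ha
      obtain ⟨h, rfl⟩ := MulAction.mem_orbit_iff.mp ((hmemA a).mp ha)
      refine Finset.mem_smul_finset.mpr ⟨(g⁻¹ * h) • y,
        (hmemA _).mpr (MulAction.mem_orbit_iff.mpr ⟨g⁻¹ * h, rfl⟩), ?_⟩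
      rw [smul_smul, ← mul_assoc, mul_inv_cancel, one_mul]
  have hconst : ∀ L₁ ∈ S.lines, ∀ L₂ ∈ S.lines, (L₁ ∩ A).card = (L₂ ∩ A).card := by
    intro L₁ h₁ L₂ h₂
    obtain ⟨g, hg⟩ := hlt.2 L₁ h₁ L₂ h₂
    calc (L₁ ∩ A).card = (g • (L₁ ∩ A)).card := (Finset.card_smul_finset g _).symm
      _ = (g • L₁ ∩ g • A).card := by rw [Finset.smul_finset_inter]
      _ = (L₂ ∩ A).card := by rw [hg, hAinv g]
  obtain ⟨Ly, hLy⟩ := Finset.card_pos.mp (by rw [hr y]; omega :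
    0 < (S.lines.filter (fun L => y ∈ L)).card)
  obtain ⟨hLy1, hLy2⟩ := Finset.mem_filter.mp hLy
  have h1 : r * (Ly ∩ A).card = A.card := by
    have h0 := S.sum_inter_lines x A hxA
    rw [Finset.sum_congr rfl (fun L hL => hconst L (Finset.mem_filter.mp hL).1 Ly hLy1),
      Finset.sum_const, hr x, smul_eq_mul] at h0
    exact h0
  have h2 : r * ((Ly ∩ A).card - 1) = A.card - 1 := by
    have h0 := S.sum_inter_lines y (A.erase y) (Finset.notMem_erase _ _)
    rw [Finset.card_erase_of_mem hyA] at h0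
    have heq : ∀ L ∈ S.lines.filter (fun L => y ∈ L), (L ∩ A.erase y).card = (Ly ∩ A).card - 1 := by
      intro L hL
      obtain ⟨hL1, hL2⟩ := Finset.mem_filter.mp hL
      have hrw : L ∩ A.erase y = (L ∩ A).erase y := by
        ext a; simp only [Finset.mem_inter, Finset.mem_erase]; tauto
      rw [hrw, Finset.card_erase_of_mem (Finset.mem_inter.mpr ⟨hL2, hyA⟩), hconst L hL1 Ly hLy1]
    rw [Finset.sum_congr rfl heq, Finset.sum_const, hr y, smul_eq_mul] at h0
    exact h0
  have hc1 : 1 ≤ (Ly ∩ A).card := Finset.card_pos.mpr ⟨y, Finset.mem_inter.mpr ⟨hLy2, hyA⟩⟩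
  have hA1 : 1 ≤ A.card := Finset.card_pos.mpr ⟨y, hyA⟩
  obtain ⟨c', hc'⟩ : ∃ c', (Ly ∩ A).card = c' + 1 := ⟨(Ly ∩ A).card - 1, by omega⟩
  rw [hc', mul_add, mul_one] at h1
  rw [hc', Nat.add_sub_cancel] at h2
  set m := r * c' with hm
  omega

end LinearSpace

open MulAction

/-- A subgroup containing the normalizer of a Sylow subgroup is self-normalizing. -/
theorem sylow_selfnorm {G : Type*} [Group G] [Finite G] {p : ℕ} [Fact p.Prime] (T : Sylow p G)
    (H : Subgroup G) (h : Subgroup.normalizer ((T : Subgroup G) : Set G) ≤ H) : Subgroup.normalizer (H : Set G) = H := by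
  refine le_antisymm ?_ Subgroup.le_normalizer
  intro g hg
  have hTH : (T : Subgroup G) ≤ H := Subgroup.le_normalizer.trans h
  have hgT : ((g • T : Sylow p G) : Subgroup G) ≤ H := by
    intro x hx
    rw [Sylow.coe_subgroup_smul, Subgroup.mem_pointwise_smul_iff_inv_smul_mem] at hx
    have hmem := hTH hx
    have hx' : (MulAut.conj g)⁻¹ • x = g⁻¹ * x * g := rfl
    rw [hx'] at hmem
    have := (Subgroup.mem_normalizer_iff.mp hg (g⁻¹ * x * g)).mp hmem
    simpa [mul_assoc] using this
  obtain ⟨x, hx⟩ := MulAction.exists_smul_eq (↥H) ((g • T).subtype hgT) (T.subtype hTH)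
  rw [Sylow.smul_subtype] at hx
  have hx2 : x • (g • T) = T := Sylow.subtype_injective hx
  rw [Subgroup.smul_def, smul_smul] at hx2
  have hn : (↑x * g) ∈ Subgroup.normalizer ((T : Subgroup G) : Set G) := Sylow.smul_eq_iff_mem_normalizer.mp hx2
  have hxg : (↑x * g) ∈ H := h hn
  have := H.mul_mem (H.inv_mem x.2) hxg
  simpa using this

theorem exists_sig_prime (b v k r : ℕ) (hbk : b * k = v * r) (hrk : r * (k - 1) = v - 1)
    (hk3 : 3 ≤ k) (hkr : k ≤ r) (hkv : k ≤ v) (hnv : b ≠ v) :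
    ∃ t : ℕ, t.Prime ∧ t ∣ b ∧ t ∣ (v - 1) ∧ ¬ t ∣ v := by
  have hv3 : 3 ≤ v := le_trans hk3 hkv
  have hvb : v < b := by
    have h1 : v * k ≤ b * k := by
      rw [hbk]
      exact Nat.mul_le_mul_left v hkr
    have := Nat.le_of_mul_le_mul_right h1 (by omega : 0 < k)
    omega
  have key : ∃ t : ℕ, t.Prime ∧ t ∣ b ∧ t ∣ (v - 1) := by
    by_cases hd : Nat.gcd b (v - 1) = 1
    · exfalso
      have hdvd : b ∣ v * (v - 1) := by
        refine ⟨k * (k - 1), ?_⟩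
        rw [← mul_assoc, ← hrk, ← mul_assoc, hbk]
      have := Nat.Coprime.dvd_of_dvd_mul_right hd hdvd
      have := Nat.le_of_dvd (by omega) this
      omega
    · obtain ⟨t, ht, htd⟩ := Nat.exists_prime_and_dvd hd
      exact ⟨t, ht, htd.trans (Nat.gcd_dvd_left _ _), htd.trans (Nat.gcd_dvd_right _ _)⟩
  obtain ⟨t, ht, htb, htv1⟩ := key
  refine ⟨t, ht, htb, htv1, fun htv => ?_⟩
  have hdvd1 : t ∣ v - (v - 1) := Nat.dvd_sub htv htv1
  rw [(by omega : v - (v - 1) = 1)] at hdvd1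
  exact ht.one_lt.ne' (Nat.eq_one_of_dvd_one hdvd1)

end Aux

theorem stmt9 {P G : Type*} [Fintype P] [DecidableEq P] [Group G] [MulAction G P]
    [Finite G]
    (S : LinearSpace P) (v b k r : ℕ) (hv : v = Fintype.card P) (hb : b = S.lines.card)
    (hnt : S.Nontrivial) (hreg : S.Regular k r) (hlt : S.LineTrans G)
    (hnpp : b ≠ v) (α : P) :
    Subgroup.normalizer (MulAction.stabilizer G α : Set G) = MulAction.stabilizer G α := by
  classical
  obtain ⟨hk3, hkv, hrk, hbk, hkr⟩ := S.numeric_facts v b k r hv hb hnt hreg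
  obtain ⟨t, htp, htb, htv1, htv⟩ := exists_sig_prime b v k r hbk hrk hk3 hkr hkv hnpp
  haveI : Fact t.Prime := ⟨htp⟩
  have hptrans := S.point_trans r hreg.2 (by omega) hlt
  -- no Sylow t-subgroup stabilizes a line
  have hnofix : ∀ (T : Sylow t G), ∀ L ∈ S.lines,
      ¬ (T : Subgroup G) ≤ MulAction.stabilizer G L := by
    intro T L hL hle
    have horb : MulAction.orbit G L = ↑S.lines := by
      ext M
      constructor
      · rintro ⟨g, rfl⟩
        exact Finset.mem_coe.mpr (hlt.1 g L hL)
      · intro hM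
        obtain ⟨g, hg⟩ := hlt.2 L hL M (Finset.mem_coe.mp hM)
        exact ⟨g, hg⟩
    have hcard : Nat.card (MulAction.orbit G L) = b := by
      rw [horb, Nat.card_coe_set_eq, Set.ncard_coe_finset, hb]
    have hG : Nat.card G = b * Nat.card (MulAction.stabilizer G L) := by
      rw [← hcard, Subgroup.card_eq_card_quotient_mul_card_subgroup (MulAction.stabilizer G L)]
      congr 1
      exact Nat.card_congr (MulAction.orbitEquivQuotientStabilizer G L).symm
    have hdvd : Nat.card (T : Subgroup G) ∣ Nat.card (MulAction.stabilizer G L) :=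
      Subgroup.card_dvd_of_le hle
    rw [T.card_eq_multiplicity] at hdvd
    have hbad : t ^ ((Nat.card G).factorization t + 1) ∣ Nat.card G := by
      conv_rhs => rw [hG, mul_comm b]
      rw [pow_succ]
      exact mul_dvd_mul hdvd htb
    exact Nat.pow_succ_factorization_not_dvd Nat.card_pos.ne' htp hbad
  -- fixed points of a Sylow t-subgroup form a subsingleton
  have hfixsub : ∀ (T : Sylow t G), ∀ β γ : P,
      β ∈ MulAction.fixedPoints (T : Subgroup G) P →
      γ ∈ MulAction.fixedPoints (T : Subgroup G) P → β = γ := by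
    intro T β γ hβ hγ
    by_contra hne
    apply hnofix T (S.theLine β γ hne) (S.theLine_mem β γ hne)
    intro g hg
    rw [MulAction.mem_stabilizer_iff]
    have h1 : g • S.theLine β γ hne ∈ S.lines := hlt.1 g _ (S.theLine_mem β γ hne)
    have hgβ : (⟨g, hg⟩ : (T : Subgroup G)) • β = β := MulAction.mem_fixedPoints.mp hβ _
    have hgγ : (⟨g, hg⟩ : (T : Subgroup G)) • γ = γ := MulAction.mem_fixedPoints.mp hγ _
    have hβ' : β ∈ g • S.theLine β γ hne := by
      have h2 := Finset.smul_mem_smul_finset (a := g) (S.left_mem_theLine β γ hne)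
      rwa [show g • β = β from hgβ] at h2
    have hγ' : γ ∈ g • S.theLine β γ hne := by
      have h2 := Finset.smul_mem_smul_finset (a := g) (S.right_mem_theLine β γ hne)
      rwa [show g • γ = γ from hgγ] at h2
    exact S.line_eq_line hne h1 (S.theLine_mem β γ hne) hβ' hγ'
      (S.left_mem_theLine β γ hne) (S.right_mem_theLine β γ hne)
  -- a Sylow t-subgroup has a fixed point
  obtain ⟨T₀⟩ : Nonempty (Sylow t G) := inferInstance
  have hmod : Nat.card P ≡ Nat.card (MulAction.fixedPoints (T₀ : Subgroup G) P) [MOD t] :=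
    T₀.2.card_modEq_card_fixedPoints P
  have hvP : Nat.card P = v := by rw [Nat.card_eq_fintype_card, ← hv]
  have hv1 : (1 : ℕ) ≤ v := by omega
  have hvmod : v ≡ 1 [MOD t] := ((Nat.modEq_iff_dvd' hv1).mpr htv1).symm
  have h1mod : Nat.card (MulAction.fixedPoints (T₀ : Subgroup G) P) ≡ 1 [MOD t] :=
    (hmod.symm.trans (hvP ▸ hvmod))
  have hfixne : Nat.card (MulAction.fixedPoints (T₀ : Subgroup G) P) ≠ 0 := by
    intro h0
    rw [h0] at h1mod
    have : t ∣ 1 - 0 := (Nat.modEq_iff_dvd' (Nat.zero_le 1)).mp h1mod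
    simp at this
    exact htp.one_lt.ne' this
  obtain ⟨⟨β, hβ⟩⟩ := Nat.card_ne_zero.mp hfixne |>.1
  -- conjugate so that α is the fixed point
  obtain ⟨h, hh⟩ := MulAction.mem_orbit_iff.mp (hptrans α β)
  set T : Sylow t G := h • T₀ with hT
  have hαfix : α ∈ MulAction.fixedPoints (T : Subgroup G) P := by
    rw [MulAction.mem_fixedPoints]
    rintro ⟨s, hs⟩
    show s • α = α
    rw [hT, Sylow.coe_subgroup_smul, Subgroup.mem_pointwise_smul_iff_inv_smul_mem] at hs
    have hs' : h⁻¹ * s * h ∈ (T₀ : Subgroup G) := hs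
    have hfix : (h⁻¹ * s * h) • β = β := MulAction.mem_fixedPoints.mp hβ ⟨_, hs'⟩
    calc s • α = (s * h) • β := by rw [← hh, smul_smul]
      _ = (h * (h⁻¹ * s * h)) • β := by congr 1; group
      _ = h • β := by rw [mul_smul, hfix]
      _ = α := hh
  have hTle : Subgroup.normalizer ((T : Subgroup G) : Set G) ≤ MulAction.stabilizer G α := by
    intro g hg
    rw [MulAction.mem_stabilizer_iff]
    apply hfixsub T (g • α) α ?_ hαfix
    rw [MulAction.mem_fixedPoints]
    rintro ⟨s, hs⟩
    show s • (g • α) = g • α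
    have hconj : g * (g⁻¹ * s * g) * g⁻¹ = s := by group
    have hs' : g⁻¹ * s * g ∈ (T : Subgroup G) :=
      (Subgroup.mem_normalizer_iff.mp hg _).mpr (by rw [hconj]; exact hs)
    have hfix : (g⁻¹ * s * g) • α = α := MulAction.mem_fixedPoints.mp hαfix ⟨_, hs'⟩
    calc s • (g • α) = (s * g) • α := by rw [smul_smul]
      _ = (g * (g⁻¹ * s * g)) • α := by congr 1; group
      _ = g • ((g⁻¹ * s * g) • α) := by rw [mul_smul]
      _ = g • α := by rw [hfix]
  exact sylow_selfnorm T _ hTle
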